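/- Let φ be a satisfiable CNF formula in which variables p_1,...,p_N occur only in negative literals, and suppose φ becomes satisfiable when all p_l are set to false. Run the following iterative procedure: maintain ψ consisting of φ as hard clauses plus soft unit clauses (p_l) for l in a set A (initially A = {1,...,N}); in each iteration, take an optimal MaxSAT solution of ψ; for each l ∈ A with p_l true in the solution, remove l from A, delete the soft clause (p_l) and all clauses containing ¬p_l, and add the hard unit clause (¬p_l); stop when no p_l is set to true. Then the procedure terminates after at most N iterations, and upon termination, l remains in A if and only if p_l is false in every satisfying assignment of φ. -/
import Mathlib


/-- Correctness of the iterative MaxSAT elimination algorithm. `Sat x p`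
expresses satisfaction of the CNF formula `φ`, where the `p`-variables occur
only negatively and `φ` is satisfiable with all `p`-variables false. The
algorithm maintains a set `A i` of surviving answer indices (`A 0 = univ`);
at step `i` it takes an optimal MaxSAT solution `(x i, p i)` of the instance
whose hard constraints are `φ` together with `(¬p_l)` for `l ∉ A i`
(equivalently: clauses containing `¬p_l` deleted), and whose soft clauses are
`(p_l)` for `l ∈ A i`; then it removes from `A` every `l` with `p i l` true.
The procedure terminates within `N` iterations (some `p i` is all-false), and
then `l ∈ A i` iff `p_l` is false in every satisfying assignment of `φ`. -/
theorem stmt_11 {χ : Type*} (N : ℕ)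
    (Sat : (χ → Bool) → (Fin N → Bool) → Prop)
    (hneg : ∀ (x : χ → Bool) (p p' : Fin N → Bool), Sat x p →
      (∀ l, p' l = true → p l = true) → Sat x p')
    (hsat : ∃ x : χ → Bool, Sat x (fun _ => false))
    (A : ℕ → Finset (Fin N)) (x : ℕ → χ → Bool) (p : ℕ → Fin N → Bool)
    (hA0 : A 0 = Finset.univ)
    (hstep : ∀ i : ℕ,
      Sat (x i) (p i) ∧ (∀ l ∉ A i, p i l = false) ∧
      (∀ (x' : χ → Bool) (p' : Fin N → Bool), Sat x' p' →
        (∀ l ∉ A i, p' l = false) →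
        (Finset.univ.filter fun l => p' l = true).card ≤
          (Finset.univ.filter fun l => p i l = true).card))
    (hnext : ∀ i : ℕ, A (i + 1) = A i \ (A i).filter (fun l => p i l = true)) :
    ∃ i ≤ N, (∀ l : Fin N, p i l = false) ∧
      (∀ l : Fin N, l ∈ A i ↔
        ∀ (x' : χ → Bool) (p' : Fin N → Bool), Sat x' p' → p' l = false) := by
  classical
  have hdec : ∀ i, A (i + 1) ⊆ A i := by
    intro i; rw [hnext]; exact Finset.sdiff_subset
  -- termination
  have hterm : ∃ i ≤ N, ∀ l, p i l = false := by
    by_contra h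
    push_neg at h
    have hss : ∀ i ≤ N, (A (i + 1)).card < (A i).card := by
      intro i hi
      obtain ⟨l, hl⟩ := h i hi
      have hlt : p i l = true := by
        cases hpl : p i l with
        | false => exact absurd hpl hl
        | true => rfl
      have hlA : l ∈ A i := by
        by_contra hn
        exact hl ((hstep i).2.1 l hn)
      have hlnot : l ∉ A (i + 1) := by
        rw [hnext]
        simp [hlA, hlt]
      exact Finset.card_lt_card ⟨hdec i, fun hsub => hlnot (hsub hlA)⟩
    have hcard : ∀ i ≤ N + 1, (A i).card + i ≤ N := by
      intro i
      induction i with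
      | zero => intro _; simp [hA0]
      | succ j ih =>
        intro hj
        have h1 := hss j (by omega)
        have h2 := ih (by omega)
        omega
    have := hcard (N + 1) le_rfl
    omega
  obtain ⟨i, hiN, hall⟩ := hterm
  refine ⟨i, hiN, hall, fun l => ⟨?_, ?_⟩⟩
  · -- l ∈ A i → p' l false for all sat assignments
    intro hlA x' p' hsat' 
    by_contra hpl
    have hpl' : p' l = true := by
      cases hq : p' l with
      | false => exact absurd hq hpl
      | true => rfl
    -- restrict p' to A i
    set p'' : Fin N → Bool := fun m => if m ∈ A i then p' m else false with hp''
    have hsat'' : Sat x' p'' := by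
      apply hneg x' p' p'' hsat'
      intro m hm
      simp only [hp''] at hm
      by_cases hmA : m ∈ A i <;> simp [hmA] at hm
      exact hm
    have hzero : ∀ m, m ∉ A i → p'' m = false := by
      intro m hm; simp [hp'', hm]
    have hopt := (hstep i).2.2 x' p'' hsat'' hzero
    have hr : (Finset.univ.filter fun m => p i m = true).card = 0 := by
      rw [Finset.card_eq_zero]
      apply Finset.filter_eq_empty_iff.mpr
      intro m _
      simp [hall m]
    have hmem : l ∈ Finset.univ.filter fun m => p'' m = true := by
      simp [hp'', hlA, hpl']
    have : 0 < (Finset.univ.filter fun m => p'' m = true).card :=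
      Finset.card_pos.mpr ⟨l, hmem⟩
    omega
  · -- contrapositive: l ∉ A i → some sat assignment with p' l true
    intro hforall
    by_contra hlA
    have hl0 : l ∈ A 0 := by simp [hA0]
    -- find the step where l was removed
    have : ∃ j, l ∈ A j ∧ l ∉ A (j + 1) := by
      by_contra hno
      push_neg at hno
      have hallin : ∀ j, l ∈ A j := by
        intro j
        induction j with
        | zero => exact hl0
        | succ k ih => exact hno k ih
      exact hlA (hallin i)
    obtain ⟨j, hj1, hj2⟩ := this
    have hpj : p j l = true := by
      by_contra hpj
      apply hj2
      rw [hnext]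
      simp only [Finset.mem_sdiff, Finset.mem_filter]
      exact ⟨hj1, fun h => hpj h.2⟩
    have := hforall (x j) (p j) (hstep j).1
    rw [this] at hpj
    exact Bool.false_ne_true hpj
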